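/- Let E be a field, let F be a Galois extension of E, and let h ∈ F[X_1,…,X_n] be a nonzero polynomial in n variables. For an automorphism ξ ∈ Gal(F/E), let ξ(h) denote the polynomial obtained by applying ξ to every coefficient of h. Then the following are equivalent: (1) for every ξ ∈ Gal(F/E) there exists c ∈ F, c ≠ 0, with ξ(h) = c·h; (2) there exists α ∈ F, α ≠ 0, such that every coefficient of α·h lies in (the image of) E. -/

import Mathlib

open MvPolynomial

lemma fixed_mem_range_of_isGalois {E F : Type*} [Field E] [Field F] [Algebra E F]
    [IsGalois E F] {x : F} (hx : ∀ σ : F ≃ₐ[E] F, σ x = x) :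
    x ∈ (algebraMap E F).range := by
  have hsep : IsSeparable E x := Algebra.IsSeparable.isSeparable E x
  have hsplit : ((minpoly E x).map (algebraMap E F)).Splits :=
    Normal.splits inferInstance x
  suffices hb : x ∈ (⊥ : Subalgebra E F) by
    obtain ⟨e, he⟩ := Algebra.mem_bot.mp hb
    exact ⟨e, he⟩
  by_contra hmem
  obtain ⟨y, hne, hconj⟩ := (notMem_iff_exists_ne_and_isConjRoot hsep hsplit).mp hmem
  obtain ⟨σ, hσ⟩ := hconj.symm.exists_algEquiv
  exact hne (hσ ▸ (hx σ).symm)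

theorem galois_descent_principal_ideal {E F : Type*} [Field E] [Field F] [Algebra E F]
    [IsGalois E F] {n : ℕ} (h : MvPolynomial (Fin n) F) (hh : h ≠ 0) :
    (∀ ξ : F ≃ₐ[E] F, ∃ c : F, c ≠ 0 ∧ MvPolynomial.map (ξ : F →+* F) h = c • h) ↔
      (∃ α : F, α ≠ 0 ∧ ∀ m : Fin n →₀ ℕ,
        MvPolynomial.coeff m (α • h) ∈ (algebraMap E F).range) := by
  constructor
  · intro H
    obtain ⟨m₀, hm₀⟩ := ne_zero_iff.mp hh
    refine ⟨(coeff m₀ h)⁻¹, inv_ne_zero hm₀, fun m => ?_⟩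
    apply fixed_mem_range_of_isGalois
    intro ξ
    obtain ⟨c, hc, hch⟩ := H ξ
    have key : ∀ m' : Fin n →₀ ℕ, ξ (coeff m' h) = c * coeff m' h := by
      intro m'
      have := congrArg (coeff m') hch
      rwa [coeff_map, coeff_smul, smul_eq_mul] at this
    rw [coeff_smul, smul_eq_mul, map_mul, map_inv₀, key m₀, key m]
    field_simp
  · rintro ⟨α, hα, hcoeff⟩ ξ
    refine ⟨α / ξ α, div_ne_zero hα (by simpa using hα), ?_⟩
    have key : MvPolynomial.map (ξ : F →+* F) (α • h) = α • h := by
      ext m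
      rw [coeff_map]
      obtain ⟨e, he⟩ := hcoeff m
      rw [← he]
      exact ξ.commutes e
    have h1 : MvPolynomial.map (ξ : F →+* F) (α • h) =
        ξ α • MvPolynomial.map (ξ : F →+* F) h := by
      ext m; simp [coeff_map, coeff_smul, smul_eq_mul]
    rw [h1] at key
    have hξα : ξ α ≠ 0 := by simpa using hα
    ext m
    have := congrArg (coeff m) key
    rw [coeff_smul, coeff_smul, smul_eq_mul, smul_eq_mul] at this
    rw [coeff_smul, smul_eq_mul, div_mul_eq_mul_div, eq_div_iff hξα, mul_comm (coeff m _),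
      ← this, mul_comm]
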